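/- Let τ ≥ 1 be fixed, {τ_k} a sequence of integers with 0 ≤ τ_k ≤ τ, s a real with t_k := t_0 + k satisfying t_0 > s, and {Z_k} a nonnegative real sequence with ∑_{k=0}^∞ t_k (t_k - s) Z_k < ∞. Then ∑_{k=0}^∞ t_k (t_k - s) ∑_{l=max(k-τ_k+1,0)}^{k} Z_l < ∞. -/

import Mathlib

open Finset

theorem summable_delayed_weighted_sum
    (τ : ℕ) (hτ : 1 ≤ τ) (τk : ℕ → ℕ) (hτk : ∀ k, τk k ≤ τ)
    (s t0 : ℝ) (hs : 0 < s) (ht0 : s < t0)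
    (t : ℕ → ℝ) (ht : ∀ k, t k = t0 + k)
    (Z : ℕ → ℝ) (hZ : ∀ k, 0 ≤ Z k)
    (hsum : Summable (fun k => t k * (t k - s) * Z k)) :
    Summable (fun k => t k * (t k - s) * ∑ l ∈ Finset.Icc (k + 1 - τk k) k, Z l) := by
  have ht0pos : (0:ℝ) < t0 := hs.trans ht0
  have htspos : ∀ k, 0 < t k - s := by
    intro k; rw [ht]
    have : (0:ℝ) ≤ k := Nat.cast_nonneg k
    linarith
  have htpos : ∀ k, 0 < t k := fun k => by
    have := htspos k; linarith
  set w : ℕ → ℝ := fun k => t k * (t k - s) * Z k with hw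
  have hwnn : ∀ k, 0 ≤ w k := fun k => by
    have h1 := (htpos k).le; have h2 := (htspos k).le; have h3 := hZ k
    exact mul_nonneg (mul_nonneg h1 h2) h3
  set C : ℝ := (1 + τ / t0) * (1 + τ / (t0 - s)) with hC
  have h0s : (0:ℝ) < t0 - s := by linarith
  have hτ0 : (0:ℝ) ≤ τ := Nat.cast_nonneg τ
  have hCpos : 0 < C := by positivity
  -- key weight comparison
  have hkey : ∀ k l : ℕ, l ≤ k → k ≤ l + τ →
      t k * (t k - s) ≤ C * (t l * (t l - s)) := by
    intro k l hlk hkl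
    have h1 : t k ≤ t l + τ := by
      rw [ht, ht]
      have : (k:ℝ) ≤ (l:ℝ) + τ := by exact_mod_cast hkl
      linarith
    have htl : t0 ≤ t l := by
      rw [ht]; have : (0:ℝ) ≤ l := Nat.cast_nonneg l; linarith
    have h2 : t l + τ ≤ (1 + τ / t0) * t l := by
      have : (τ:ℝ) ≤ (τ / t0) * t l := by
        rw [div_mul_eq_mul_div, le_div_iff₀ ht0pos]
        nlinarith
      linarith
    have h3 : t k - s ≤ (1 + τ / (t0 - s)) * (t l - s) := by
      have hts : t0 - s ≤ t l - s := by linarith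
      have : (τ:ℝ) ≤ (τ / (t0 - s)) * (t l - s) := by
        rw [div_mul_eq_mul_div, le_div_iff₀ h0s]
        nlinarith
      linarith
    have hks := (htspos k).le
    have hls := htspos l
    have hlp := htpos l
    calc t k * (t k - s) ≤ (t l + τ) * (t k - s) := by nlinarith
      _ ≤ ((1 + τ / t0) * t l) * ((1 + τ / (t0 - s)) * (t l - s)) := by
          have := mul_le_mul h2 h3 hks (by positivity)
          linarith [this]
      _ = C * (t l * (t l - s)) := by ring
  -- dominating summable function
  set G : ℕ → ℝ := fun k => C * ∑ j ∈ range τ, (if j ≤ k then w (k - j) else 0)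
    with hG
  have hGsum : Summable G := by
    apply Summable.mul_left
    apply summable_sum
    intro j _
    have : Summable (fun n => (fun k => if j ≤ k then w (k - j) else 0) (n + j)) := by
      simp only [le_add_iff_nonneg_left, Nat.add_sub_cancel, zero_le, if_true]
      exact hsum
    exact (summable_nat_add_iff j).mp this
  apply Summable.of_nonneg_of_le _ _ hGsum
  · intro k
    have : 0 ≤ ∑ l ∈ Finset.Icc (k + 1 - τk k) k, Z l :=
      Finset.sum_nonneg fun l _ => hZ l
    exact mul_nonneg (mul_nonneg (htpos k).le (htspos k).le) this
  · intro k
    have hsub : Finset.Icc (k + 1 - τk k) k ⊆ Finset.Icc (k + 1 - τ) k := by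
      apply Finset.Icc_subset_Icc_left
      exact Nat.sub_le_sub_left (hτk k) _
    calc t k * (t k - s) * ∑ l ∈ Finset.Icc (k + 1 - τk k) k, Z l
        ≤ t k * (t k - s) * ∑ l ∈ Finset.Icc (k + 1 - τ) k, Z l := by
          apply mul_le_mul_of_nonneg_left _
            (mul_nonneg (htpos k).le (htspos k).le)
          exact Finset.sum_le_sum_of_subset_of_nonneg hsub fun l _ _ => hZ l
      _ = ∑ l ∈ Finset.Icc (k + 1 - τ) k, t k * (t k - s) * Z l := by
          rw [Finset.mul_sum]
      _ ≤ ∑ l ∈ Finset.Icc (k + 1 - τ) k, C * w l := by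
          apply Finset.sum_le_sum
          intro l hl
          rw [Finset.mem_Icc] at hl
          have hkl : k ≤ l + τ := by
            have := Nat.sub_le_iff_le_add.mp hl.1
            omega
          have hk2 := hkey k l hl.2 hkl
          have hZl := hZ l
          calc t k * (t k - s) * Z l ≤ C * (t l * (t l - s)) * Z l :=
                mul_le_mul_of_nonneg_right hk2 hZl
            _ = C * w l := by rw [hw]; ring
      _ = C * ∑ l ∈ Finset.Icc (k + 1 - τ) k, w l := by rw [Finset.mul_sum]
      _ ≤ G k := by
          rw [hG]
          apply mul_le_mul_of_nonneg_left _ hCpos.le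
          -- reindex l ↦ k - l
          have himg : ∑ l ∈ Finset.Icc (k + 1 - τ) k, w l
              = ∑ j ∈ (Finset.Icc (k + 1 - τ) k).image (fun l => k - l),
                  (if j ≤ k then w (k - j) else 0) := by
            rw [Finset.sum_image]
            · apply Finset.sum_congr rfl
              intro l hl
              rw [Finset.mem_Icc] at hl
              rw [if_pos (Nat.sub_le k l), Nat.sub_sub_self hl.2]
            · intro a ha b hb hab
              rw [Finset.mem_coe, Finset.mem_Icc] at ha hb
              beta_reduce at hab
              omega
          rw [himg]
          apply Finset.sum_le_sum_of_subset_of_nonneg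
          · intro j hj
            simp only [Finset.mem_image, Finset.mem_Icc] at hj
            obtain ⟨l, ⟨hl1, hl2⟩, rfl⟩ := hj
            rw [Finset.mem_range]
            have := Nat.sub_le_iff_le_add.mp hl1
            omega
          · intro j _ _
            split
            · exact hwnn _
            · exact le_rfl
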